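/- The square of a cycle of length ℓ ≥ 5 is a minimal critical graph in the class 𝒞 of simple connected graphs of minimum degree at least 4: for every edge e, both the deletion G − e and the simplified contraction G/e fail to lie in 𝒞. -/

import Mathlib

open SimpleGraph

/-- Subdivide the edge `uv` of `G`: the new vertex is `none`. -/
def SubdivideEdge {V : Type} (G : SimpleGraph V) (u v : V) : SimpleGraph (Option V) :=
  SimpleGraph.fromRel (fun a b =>
    (∃ x y : V, a = some x ∧ b = some y ∧ G.Adj x y ∧ s(x, y) ≠ s(u, v)) ∨
    (a = none ∧ (b = some u ∨ b = some v)))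

/-- `IsSubdivisionOf G H` : `G` is isomorphic to a graph obtained from `H` by
repeatedly subdividing edges. -/
inductive IsSubdivisionOf : {V W : Type} → SimpleGraph V → SimpleGraph W → Prop
  | base {V W : Type} {G : SimpleGraph V} {H : SimpleGraph W} (e : G ≃g H) :
      IsSubdivisionOf G H
  | subdiv {V W U : Type} {G : SimpleGraph V} {H : SimpleGraph W} {S : SimpleGraph U}
      {u v : U} (h : S.Adj u v) (hS : IsSubdivisionOf S H)
      (e : G ≃g SubdivideEdge S u v) : IsSubdivisionOf G H

def K4 : SimpleGraph (Fin 4) := ⊤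

def K5 : SimpleGraph (Fin 5) := ⊤

/-- `K_4` minus one edge. -/
def K4minus : SimpleGraph (Fin 4) := K4.deleteEdges {s((0 : Fin 4), (1 : Fin 4))}

/-- The wheel with `n` rim vertices; the hub is `none`. -/
def Wheel (n : ℕ) : SimpleGraph (Option (Fin n)) :=
  SimpleGraph.fromRel (fun a b =>
    a = none ∨ ∃ i j : Fin n, a = some i ∧ b = some j ∧ (i.val + 1) % n = j.val)

/-- The prism `K_2 × K_3`. -/
def Prism : SimpleGraph (Fin 2 × Fin 3) :=
  SimpleGraph.boxProd (⊤ : SimpleGraph (Fin 2)) (⊤ : SimpleGraph (Fin 3))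

def K33 : SimpleGraph (Fin 3 ⊕ Fin 3) := completeBipartiteGraph (Fin 3) (Fin 3)

/-- `H` is isomorphic to a subdivision of a wheel, the prism, or `K_{3,3}`. -/
def IsWPKSubdivision {V : Type} (H : SimpleGraph V) : Prop :=
  (∃ n, 3 ≤ n ∧ IsSubdivisionOf H (Wheel n)) ∨
    IsSubdivisionOf H Prism ∨ IsSubdivisionOf H K33

/-- The square of a cycle of length `n`. -/
def cycleSq (n : ℕ) : SimpleGraph (Fin n) :=
  SimpleGraph.fromRel (fun a b => (a.val + 1) % n = b.val ∨ (a.val + 2) % n = b.val)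

/-- The cycle of length `n`. -/
def cycleG (n : ℕ) : SimpleGraph (Fin n) :=
  SimpleGraph.fromRel (fun a b => (a.val + 1) % n = b.val)

/-- Membership in the class 𝒞 of (simple) connected graphs of minimum degree at least 4. -/
def InC {V : Type} (G : SimpleGraph V) : Prop :=
  G.Connected ∧ ∀ v : V, 4 ≤ (G.neighborSet v).ncard

/-- Contract the edge `xy` of `G` to the vertex `x` and simplify. -/
def contractEdge {V : Type} (G : SimpleGraph V) (x y : V) :
    SimpleGraph {z : V // z ≠ y} :=
  SimpleGraph.fromRel (fun a b =>
    G.Adj a.val b.val ∨ (a.val = x ∧ G.Adj y b.val) ∨ (b.val = x ∧ G.Adj a.val y))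

/-- `G` is 4-connected: at least 5 vertices and deleting any at most 3 vertices
leaves a connected graph. -/
def FourConnected {V : Type} [Fintype V] (G : SimpleGraph V) : Prop :=
  5 ≤ Fintype.card V ∧
    ∀ s : Finset V, s.card ≤ 3 → (G.induce ((↑s : Set V)ᶜ)).Connected

/-- `G` is 3-connected: at least 4 vertices and deleting any at most 2 vertices
leaves a connected graph. -/
def ThreeConnected {V : Type} [Fintype V] (G : SimpleGraph V) : Prop :=
  4 ≤ Fintype.card V ∧
    ∀ s : Finset V, s.card ≤ 2 → (G.induce ((↑s : Set V)ᶜ)).Connected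

/-- Planarity, encoded via Kuratowski's characterization: no subgraph is a
subdivision of `K_5` or `K_{3,3}`. -/
def KuratowskiPlanar {V : Type} (G : SimpleGraph V) : Prop :=
  ¬ ∃ H : G.Subgraph, IsSubdivisionOf H.coe K5 ∨ IsSubdivisionOf H.coe K33

/-- The friendship graph made of `n` triangles glued at the hub `none`. -/
def FriendshipGraph (n : ℕ) : SimpleGraph (Option (Fin n × Fin 2)) :=
  SimpleGraph.fromRel (fun a b =>
    a = none ∨ ∃ (i : Fin n) (p q : Fin 2), a = some (i, p) ∧ b = some (i, q))

def IsFriendship {V : Type} (G : SimpleGraph V) : Prop :=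
  ∃ n : ℕ, 1 ≤ n ∧ Nonempty (G ≃g FriendshipGraph n)

/-- Membership in the class of (simple) connected graphs of minimum degree at least 2. -/
def InC2 {V : Type} (G : SimpleGraph V) : Prop :=
  G.Connected ∧ ∀ v : V, 2 ≤ (G.neighborSet v).ncard


section CycleSqHelpers

lemma modfact {n : ℕ} (m k : ℕ) (hm : m < n) (hk : k ≤ n) :
    (m + k) % n < n ∧ ((m + k) % n = m + k ∨ (m + k) % n + n = m + k) := by
  refine ⟨Nat.mod_lt _ (by omega), ?_⟩
  rcases Nat.lt_or_ge (m + k) n with h1 | h1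
  · left; exact Nat.mod_eq_of_lt h1
  · right
    have h2 : m + k - n < n := by omega
    have h3 : (m + k) % n = (m + k - n) % n := by
      conv_lhs => rw [show m + k = (m + k - n) + n by omega]
      rw [Nat.add_mod_right]
    rw [h3, Nat.mod_eq_of_lt h2]; omega

def fs {n : ℕ} (hn : 0 < n) (v : Fin n) (k : ℕ) : Fin n :=
  ⟨(v.val + k) % n, Nat.mod_lt _ hn⟩

@[simp] lemma fs_val {n : ℕ} (hn : 0 < n) (v : Fin n) (k : ℕ) :
    (fs hn v k).val = (v.val + k) % n := rfl

lemma cycleSq_adj {n : ℕ} (a b : Fin n) :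
    (cycleSq n).Adj a b ↔ a ≠ b ∧ ((a.val + 1) % n = b.val ∨ (a.val + 2) % n = b.val ∨
      (b.val + 1) % n = a.val ∨ (b.val + 2) % n = a.val) := by
  simp only [cycleSq, fromRel_adj]; tauto

lemma nbhd {n : ℕ} (hn : 5 ≤ n) (v : Fin n) :
    (cycleSq n).neighborSet v =
      {fs (by omega) v 1, fs (by omega) v 2, fs (by omega) v (n-1), fs (by omega) v (n-2)} := by
  ext q
  have hv := v.isLt; have hq := q.isLt
  have m1 := modfact v.val 1 hv (by omega)
  have m2 := modfact v.val 2 hv (by omega)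
  have m3 := modfact v.val (n-1) hv (by omega)
  have m4 := modfact v.val (n-2) hv (by omega)
  have m5 := modfact q.val 1 hq (by omega)
  have m6 := modfact q.val 2 hq (by omega)
  simp only [mem_neighborSet, cycleSq_adj, Set.mem_insert_iff, Set.mem_singleton_iff,
    Fin.ext_iff, fs_val, ne_eq]
  omega

lemma nbhd_ncard {n : ℕ} (hn : 5 ≤ n) (v : Fin n) :
    ((cycleSq n).neighborSet v).ncard = 4 := by
  rw [nbhd hn]
  have hv := v.isLt
  have m1 := modfact v.val 1 hv (by omega)
  have m2 := modfact v.val 2 hv (by omega)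
  have m3 := modfact v.val (n-1) hv (by omega)
  have m4 := modfact v.val (n-2) hv (by omega)
  rw [Set.ncard_insert_of_notMem (by simp [Fin.ext_iff]; omega) (Set.toFinite _),
    Set.ncard_insert_of_notMem (by simp [Fin.ext_iff]; omega) (Set.toFinite _),
    Set.ncard_insert_of_notMem (by simp [Fin.ext_iff]; omega) (Set.toFinite _),
    Set.ncard_singleton]

lemma cycleSq_connected {n : ℕ} (hn : 5 ≤ n) : (cycleSq n).Connected := by
  rw [connected_iff]
  refine ⟨?_, ⟨⟨0, by omega⟩⟩⟩
  have key : ∀ k (hk : k < n), (cycleSq n).Reachable ⟨0, by omega⟩ ⟨k, hk⟩ := by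
    intro k
    induction k with
    | zero => intro hk; exact Reachable.refl _
    | succ m ih =>
      intro hk
      have hm : m < n := by omega
      refine (ih hm).trans (Adj.reachable ?_)
      rw [cycleSq_adj]
      refine ⟨by simp [Fin.ext_iff], Or.inl ?_⟩
      simp [Nat.mod_eq_of_lt hk]
  intro u v
  have hu : (⟨u.val, u.isLt⟩ : Fin n) = u := rfl
  have hv : (⟨v.val, v.isLt⟩ : Fin n) = v := rfl
  exact (hu ▸ key u.val u.isLt).symm.trans (hv ▸ key v.val v.isLt)

lemma del_not_inC {n : ℕ} (hn : 5 ≤ n) (a b : Fin n) (hab : (cycleSq n).Adj a b) :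
    ¬ InC ((cycleSq n).deleteEdges {s(a, b)}) := by
  rintro ⟨-, hdeg⟩
  have hne : a ≠ b := hab.ne
  have hN : ((cycleSq n).deleteEdges {s(a, b)}).neighborSet a
      = (cycleSq n).neighborSet a \ {b} := by
    ext q
    simp only [mem_neighborSet, deleteEdges_adj, Set.mem_singleton_iff, Set.mem_diff,
      Sym2.eq, Sym2.rel_iff', Prod.mk.injEq, Prod.swap_prod_mk]
    tauto
  have hmem : b ∈ (cycleSq n).neighborSet a := hab
  have := hdeg a
  rw [hN, Set.ncard_diff_singleton_of_mem hmem, nbhd_ncard hn] at this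
  omega

lemma contract_small {n : ℕ} (hn : 5 ≤ n) (a b : Fin n) (w : Fin n)
    (hwb : w ≠ b) (hwa : w ≠ a) (x y z : Fin n)
    (hcov : ∀ q : Fin n, q ≠ b → (cycleSq n).Adj w q → (q = x ∨ q = y ∨ q = z))
    (ha : a = x ∨ a = y ∨ a = z) :
    ¬ InC (contractEdge (cycleSq n) a b) := by
  rintro ⟨-, hdeg⟩
  have h4 := hdeg ⟨w, hwb⟩
  have himg : Subtype.val '' ((contractEdge (cycleSq n) a b).neighborSet ⟨w, hwb⟩)
      ⊆ {x, y, z} := by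
    rintro v ⟨q, hq, rfl⟩
    rw [mem_neighborSet, contractEdge, fromRel_adj] at hq
    obtain ⟨hne, hq⟩ := hq
    have hqb : q.val ≠ b := q.prop
    simp only [Set.mem_insert_iff, Set.mem_singleton_iff]
    rcases hq with (h | ⟨h1, -⟩ | ⟨h1, h2⟩) | (h | ⟨h1, h2⟩ | ⟨h1, -⟩)
    · exact hcov q.val hqb h
    · exact absurd h1 hwa
    · rw [h1]; exact ha
    · exact hcov q.val hqb h.symm
    · rw [h1]; exact ha
    · exact absurd h1 hwa
  have hle : ((contractEdge (cycleSq n) a b).neighborSet ⟨w, hwb⟩).ncard ≤ 3 := by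
    rw [← Set.ncard_image_of_injective _ Subtype.val_injective]
    refine le_trans (Set.ncard_le_ncard himg (Set.toFinite _)) ?_
    refine le_trans (Set.ncard_insert_le _ _) ?_
    refine le_trans (Nat.add_le_add_right (Set.ncard_insert_le _ _) 1) ?_
    simp [Set.ncard_singleton]
  omega

end CycleSqHelpers

set_option maxHeartbeats 1000000 in
/-- The square of a cycle of length at least 5 is a minimal critical
graph in 𝒞: it lies in 𝒞, and for every edge both the deletion and the simplified
contraction fail to lie in 𝒞. -/
theorem stmt_11 (n : ℕ) (h : 5 ≤ n) :
    InC (cycleSq n) ∧ ∀ a b : Fin n, (cycleSq n).Adj a b →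
      ¬ InC ((cycleSq n).deleteEdges {s(a, b)}) ∧
        ¬ InC (contractEdge (cycleSq n) a b) := by
  have pos : 0 < n := by omega
  constructor
  · exact ⟨cycleSq_connected h, fun v => by rw [nbhd_ncard h]⟩
  intro a b hab
  refine ⟨del_not_inC h a b hab, ?_⟩
  obtain ⟨hne, hcase⟩ := (cycleSq_adj a b).mp hab
  have ha' := a.isLt; have hb' := b.isLt
  clear hab hne
  rcases hcase with h1 | h2 | h3 | h4
  · -- b = a + 1 ; contract witness w = a - 1
    have ma1 := modfact a.val 1 ha' (by omega)
    have man1 := modfact a.val (n-1) ha' (by omega)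
    have hWlt : (a.val + (n-1)) % n < n := Nat.mod_lt _ pos
    have mw1 := modfact ((a.val + (n-1)) % n) 1 hWlt (by omega)
    have mw2 := modfact ((a.val + (n-1)) % n) 2 hWlt (by omega)
    have mw3 := modfact ((a.val + (n-1)) % n) (n-1) hWlt (by omega)
    have mw4 := modfact ((a.val + (n-1)) % n) (n-2) hWlt (by omega)
    refine contract_small h a b (fs pos a (n-1))
      (by simp only [ne_eq, Fin.ext_iff, fs_val]; omega)
      (by simp only [ne_eq, Fin.ext_iff, fs_val]; omega)
      (fs pos (fs pos a (n-1)) 1) (fs pos (fs pos a (n-1)) (n-1))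
      (fs pos (fs pos a (n-1)) (n-2))
      ?_ (by simp only [Fin.ext_iff, fs_val]; omega)
    intro q hqb hadj
    rw [← mem_neighborSet, nbhd h] at hadj
    have hqb' : q.val ≠ b.val := fun hh => hqb (Fin.val_injective hh)
    simp only [Set.mem_insert_iff, Set.mem_singleton_iff, Fin.ext_iff, fs_val] at hadj ⊢
    omega
  · -- b = a + 2 ; contract witness w = a + 1
    have ma1 := modfact a.val 1 ha' (by omega)
    have ma2 := modfact a.val 2 ha' (by omega)
    have hWlt : (a.val + 1) % n < n := Nat.mod_lt _ pos
    have mw1 := modfact ((a.val + 1) % n) 1 hWlt (by omega)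
    have mw2 := modfact ((a.val + 1) % n) 2 hWlt (by omega)
    have mw3 := modfact ((a.val + 1) % n) (n-1) hWlt (by omega)
    have mw4 := modfact ((a.val + 1) % n) (n-2) hWlt (by omega)
    refine contract_small h a b (fs pos a 1)
      (by simp only [ne_eq, Fin.ext_iff, fs_val]; omega)
      (by simp only [ne_eq, Fin.ext_iff, fs_val]; omega)
      (fs pos (fs pos a 1) 2) (fs pos (fs pos a 1) (n-1)) (fs pos (fs pos a 1) (n-2))
      ?_ (by simp only [Fin.ext_iff, fs_val]; omega)
    intro q hqb hadj
    rw [← mem_neighborSet, nbhd h] at hadj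
    have hqb' : q.val ≠ b.val := fun hh => hqb (Fin.val_injective hh)
    simp only [Set.mem_insert_iff, Set.mem_singleton_iff, Fin.ext_iff, fs_val] at hadj ⊢
    omega
  · -- a = b + 1 ; contract witness w = a + 1
    have ma1 := modfact a.val 1 ha' (by omega)
    have mb1 := modfact b.val 1 hb' (by omega)
    have hWlt : (a.val + 1) % n < n := Nat.mod_lt _ pos
    have mw1 := modfact ((a.val + 1) % n) 1 hWlt (by omega)
    have mw2 := modfact ((a.val + 1) % n) 2 hWlt (by omega)
    have mw3 := modfact ((a.val + 1) % n) (n-1) hWlt (by omega)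
    have mw4 := modfact ((a.val + 1) % n) (n-2) hWlt (by omega)
    refine contract_small h a b (fs pos a 1)
      (by simp only [ne_eq, Fin.ext_iff, fs_val]; omega)
      (by simp only [ne_eq, Fin.ext_iff, fs_val]; omega)
      (fs pos (fs pos a 1) 1) (fs pos (fs pos a 1) 2) (fs pos (fs pos a 1) (n-1))
      ?_ (by simp only [Fin.ext_iff, fs_val]; omega)
    intro q hqb hadj
    rw [← mem_neighborSet, nbhd h] at hadj
    have hqb' : q.val ≠ b.val := fun hh => hqb (Fin.val_injective hh)
    simp only [Set.mem_insert_iff, Set.mem_singleton_iff, Fin.ext_iff, fs_val] at hadj ⊢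
    omega
  · -- a = b + 2 ; contract witness w = a - 1
    have man1 := modfact a.val (n-1) ha' (by omega)
    have mb2 := modfact b.val 2 hb' (by omega)
    have hWlt : (a.val + (n-1)) % n < n := Nat.mod_lt _ pos
    have mw1 := modfact ((a.val + (n-1)) % n) 1 hWlt (by omega)
    have mw2 := modfact ((a.val + (n-1)) % n) 2 hWlt (by omega)
    have mw3 := modfact ((a.val + (n-1)) % n) (n-1) hWlt (by omega)
    have mw4 := modfact ((a.val + (n-1)) % n) (n-2) hWlt (by omega)
    refine contract_small h a b (fs pos a (n-1))
      (by simp only [ne_eq, Fin.ext_iff, fs_val]; omega)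
      (by simp only [ne_eq, Fin.ext_iff, fs_val]; omega)
      (fs pos (fs pos a (n-1)) 1) (fs pos (fs pos a (n-1)) 2)
      (fs pos (fs pos a (n-1)) (n-2))
      ?_ (by simp only [Fin.ext_iff, fs_val]; omega)
    intro q hqb hadj
    rw [← mem_neighborSet, nbhd h] at hadj
    have hqb' : q.val ≠ b.val := fun hh => hqb (Fin.val_injective hh)
    simp only [Set.mem_insert_iff, Set.mem_singleton_iff, Fin.ext_iff, fs_val] at hadj ⊢
    omega
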